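/- There exists a constant C > 0 such that for every real number r ≥ 2 and every positive integer N, with r_i = r^{2^{i−1}} and β_{i0} = (4/3)^i (log₂ r_{i+1})/(log₂ r), the following seven-term sum is at most C · r^{−1/2} (log₂ r)²: r^{−1/2} log₂ r + ∑_{i=1}^{N} r_i^{−1/2} β_{i0} log₂ r + ∑_{i=1}^{N} r_i^{−1/2} β_{i0} · i + ∑_{j=2}^{N} r_j^{−1/2} (∑_{i=1}^{j−1} r_i^{1/2} β_{i0}) log₂ r + ∑_{j=2}^{N} r_j^{−1/2} · j · (∑_{i=1}^{j−1} r_i^{1/2} β_{i0}) + ∑_{j=1}^{N} r_j^{−1/2} (log₂ r)² + ∑_{j=1}^{N} r_j^{−1/2} · j · log₂ r. (This is the arithmetic content of the bound showing the total update debt of the algorithm is O((n/√r) log² r).) -/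

import Mathlib

open Finset

/-- The doubly exponentially growing sequence `r_i = r^(2^(i-1))`, so that
`r_1 = r` and `r_{i+1} = r_i²`. -/
noncomputable def rseq (r : ℝ) (i : ℕ) : ℝ := r ^ 2 ^ (i - 1)

/-- `β_{i0} = (4/3)^i · log₂ r_{i+1} / log₂ r`. -/
noncomputable def beta0 (r : ℝ) (i : ℕ) : ℝ :=
  (4 / 3 : ℝ) ^ i * (Real.logb 2 (rseq r (i + 1)) / Real.logb 2 r)

lemma rseq_pos {r : ℝ} (hr : 2 ≤ r) (i : ℕ) : 0 < rseq r i :=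
  pow_pos (by linarith) _

lemma beta0_eq {r : ℝ} (hr : 2 ≤ r) (i : ℕ) : beta0 r i = (8 / 3 : ℝ) ^ i := by
  have hL : Real.logb 2 r ≠ 0 := ne_of_gt (Real.logb_pos one_lt_two (by linarith))
  unfold beta0 rseq
  simp only [Nat.add_sub_cancel]
  rw [Real.logb_pow, mul_div_assoc, div_self hL, mul_one]
  push_cast
  rw [← mul_pow]
  norm_num

lemma natlem (i : ℕ) : 5 * i ≤ 70 + (2 ^ (i - 1) - 1) / 2 := by
  rcases le_or_gt i 14 with h | h
  · calc 5 * i ≤ 70 := by omega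
    _ ≤ _ := Nat.le_add_right 70 _
  · obtain ⟨m, rfl⟩ : ∃ m, i = m + 15 := ⟨i - 15, by omega⟩
    have h2 : m < 2 ^ m := Nat.lt_two_pow_self (n := m)
    have h3 : 2 ^ (m + 15 - 1) = 16384 * 2 ^ m := by
      rw [show m + 15 - 1 = m + 14 from rfl, pow_add]; ring
    omega

lemma rseq_sq {r : ℝ} {j : ℕ} (hj : 2 ≤ j) : rseq r j = (rseq r (j - 1)) ^ 2 := by
  have h : 2 ^ (j - 1) = 2 ^ (j - 1 - 1) * 2 := by
    rw [← pow_succ]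
    congr 1
    omega
  unfold rseq
  rw [h, pow_mul]

lemma rhosig {r : ℝ} (hr : 2 ≤ r) {j : ℕ} (hj : 2 ≤ j) :
    rseq r j ^ (-(1 / 2) : ℝ) * rseq r (j - 1) ^ ((1 : ℝ) / 2)
      = rseq r (j - 1) ^ (-(1 / 2) : ℝ) := by
  have hx : 0 < rseq r (j - 1) := rseq_pos hr _
  rw [rseq_sq hj, ← Real.rpow_natCast (rseq r (j - 1)) 2, ← Real.rpow_mul hx.le,
    ← Real.rpow_add hx]
  norm_num

lemma rseq_mono {r : ℝ} (hr : 2 ≤ r) {i k : ℕ} (h : i ≤ k) : rseq r i ≤ rseq r k := by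
  unfold rseq
  exact pow_le_pow_right₀ (by linarith) (Nat.pow_le_pow_right (by norm_num) (by omega))

lemma geo1 (N : ℕ) : ∑ i ∈ Icc 1 N, ((1 : ℝ) / 2) ^ i = 1 - (1 / 2) ^ N := by
  induction N with
  | zero => simp
  | succ n ih =>
    rw [Finset.sum_Icc_succ_top (by omega), ih, pow_succ]
    ring


lemma key {r : ℝ} (hr : 2 ≤ r) {i : ℕ} (hi : 1 ≤ i) :
    rseq r i ^ (-(1 / 2) : ℝ) * ((8 / 3 : ℝ) ^ i * (i : ℝ) ^ 2)
      ≤ 2 ^ 70 * r ^ (-(1 / 2) : ℝ) * (1 / 2 : ℝ) ^ i := by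
  have hr0 : (0 : ℝ) < r := by linarith
  set a : ℕ := 2 ^ (i - 1) with ha
  have ha1 : 1 ≤ a := Nat.one_le_two_pow
  have ha1' : (1 : ℝ) ≤ (a : ℝ) := by exact_mod_cast ha1
  set y : ℝ := ((a : ℝ) - 1) / 2 with hy
  have hy0 : 0 ≤ y := by rw [hy]; linarith
  have e1 : rseq r i ^ (-(1 / 2) : ℝ) = r ^ (-(1 / 2) : ℝ) * r ^ (-y) := by
    unfold rseq
    rw [← ha, ← Real.rpow_natCast r a, ← Real.rpow_mul hr0.le, ← Real.rpow_add hr0]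
    congr 1
    rw [hy]; ring
  have e2 : r ^ (-y) ≤ 2 ^ (-y) := by
    rw [Real.rpow_neg (by norm_num : (0:ℝ) ≤ 2), Real.rpow_neg hr0.le]
    exact inv_anti₀ (Real.rpow_pos_of_pos two_pos _)
      (Real.rpow_le_rpow (by norm_num) hr hy0)
  -- main numeric bound
  set q : ℕ := (a - 1) / 2 with hq
  have hqy : (q : ℝ) ≤ y := by
    have h1 : 2 * q ≤ a - 1 := by omega
    have h2 : ((a - 1 : ℕ) : ℝ) = (a : ℝ) - 1 := by
      rw [Nat.cast_sub ha1]; norm_num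
    have h3 : (2 : ℝ) * q ≤ (a : ℝ) - 1 := by
      rw [← h2]; exact_mod_cast h1
    rw [hy]; linarith
  have h5 : ((i : ℝ)) ^ 2 ≤ 4 ^ i := by
    have h6 : (i : ℝ) ≤ 2 ^ i := by exact_mod_cast (Nat.lt_two_pow_self (n := i)).le
    calc ((i : ℝ)) ^ 2 ≤ ((2 : ℝ) ^ i) ^ 2 :=
          pow_le_pow_left₀ (Nat.cast_nonneg i) h6 2
      _ = 4 ^ i := by rw [← pow_mul, mul_comm, pow_mul]; norm_num
  have hX : (8 / 3 : ℝ) ^ i * (i : ℝ) ^ 2 ≤ 16 ^ i := by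
    calc (8 / 3 : ℝ) ^ i * (i : ℝ) ^ 2 ≤ (8 / 3 : ℝ) ^ i * 4 ^ i := by
          gcongr
      _ = (32 / 3 : ℝ) ^ i := by rw [← mul_pow]; norm_num
      _ ≤ 16 ^ i := by gcongr <;> norm_num
  have e16 : (16 : ℝ) ^ i = 2 ^ (5 * i) * (1 / 2 : ℝ) ^ i := by
    rw [pow_mul, ← mul_pow]; norm_num
  have h7 : (2 : ℝ) ^ (5 * i) ≤ 2 ^ 70 * 2 ^ q := by
    rw [← pow_add]
    exact pow_le_pow_right₀ one_le_two (natlem i)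
  have h8 : (2 : ℝ) ^ q ≤ (2 : ℝ) ^ y := by
    rw [← Real.rpow_natCast 2 q]
    exact Real.rpow_le_rpow_of_exponent_le one_le_two hqy
  have h2y : (0 : ℝ) < (2 : ℝ) ^ y := Real.rpow_pos_of_pos two_pos y
  have hmain : (2 : ℝ) ^ (-y) * ((8 / 3 : ℝ) ^ i * (i : ℝ) ^ 2) ≤ 2 ^ 70 * (1 / 2 : ℝ) ^ i := by
    rw [Real.rpow_neg (by norm_num : (0:ℝ) ≤ 2), inv_mul_le_iff₀ h2y]
    calc (8 / 3 : ℝ) ^ i * (i : ℝ) ^ 2 ≤ 16 ^ i := hX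
      _ = 2 ^ (5 * i) * (1 / 2 : ℝ) ^ i := e16
      _ ≤ (2 ^ 70 * 2 ^ q) * (1 / 2 : ℝ) ^ i := by gcongr
      _ ≤ (2 ^ 70 * (2:ℝ) ^ y) * (1 / 2 : ℝ) ^ i := by gcongr
      _ = (2:ℝ) ^ y * (2 ^ 70 * (1 / 2 : ℝ) ^ i) := by ring
  calc rseq r i ^ (-(1 / 2) : ℝ) * ((8 / 3 : ℝ) ^ i * (i : ℝ) ^ 2)
      = r ^ (-(1 / 2) : ℝ) * (r ^ (-y) * ((8 / 3 : ℝ) ^ i * (i : ℝ) ^ 2)) := by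
        rw [e1]; ring
    _ ≤ r ^ (-(1 / 2) : ℝ) * ((2:ℝ) ^ (-y) * ((8 / 3 : ℝ) ^ i * (i : ℝ) ^ 2)) := by
        gcongr
    _ ≤ r ^ (-(1 / 2) : ℝ) * (2 ^ 70 * (1 / 2 : ℝ) ^ i) :=
        mul_le_mul_of_nonneg_left hmain (Real.rpow_pos_of_pos hr0 _).le
    _ = 2 ^ 70 * r ^ (-(1 / 2) : ℝ) * (1 / 2 : ℝ) ^ i := by ring


lemma key_facts {r : ℝ} (hr : 2 ≤ r) {i : ℕ} (hi : 1 ≤ i) :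
    (0 : ℝ) < rseq r i ^ (-(1 / 2) : ℝ) ∧ (1 : ℝ) ≤ (8 / 3 : ℝ) ^ i ∧ (1 : ℝ) ≤ (i : ℝ) :=
  ⟨Real.rpow_pos_of_pos (rseq_pos hr i) _, one_le_pow₀ (by norm_num), by exact_mod_cast hi⟩

lemma key0 {r : ℝ} (hr : 2 ≤ r) {i : ℕ} (hi : 1 ≤ i) :
    rseq r i ^ (-(1 / 2) : ℝ) ≤ 2 ^ 70 * r ^ (-(1 / 2) : ℝ) * (1 / 2 : ℝ) ^ i := by
  obtain ⟨hρ, h83, h1i⟩ := key_facts hr hi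
  have h := key hr hi
  have hi2 : (1 : ℝ) ≤ (i : ℝ) ^ 2 := by nlinarith [h1i]
  have hin : (1 : ℝ) ≤ (8 / 3 : ℝ) ^ i * (i : ℝ) ^ 2 := by nlinarith [h83, hi2]
  calc rseq r i ^ (-(1 / 2) : ℝ) = rseq r i ^ (-(1 / 2) : ℝ) * 1 := (mul_one _).symm
    _ ≤ rseq r i ^ (-(1 / 2) : ℝ) * ((8 / 3 : ℝ) ^ i * (i : ℝ) ^ 2) :=
        mul_le_mul_of_nonneg_left hin hρ.le
    _ ≤ _ := h

lemma key1 {r : ℝ} (hr : 2 ≤ r) {i : ℕ} (hi : 1 ≤ i) :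
    rseq r i ^ (-(1 / 2) : ℝ) * (8 / 3 : ℝ) ^ i
      ≤ 2 ^ 70 * r ^ (-(1 / 2) : ℝ) * (1 / 2 : ℝ) ^ i := by
  obtain ⟨hρ, h83, h1i⟩ := key_facts hr hi
  have h := key hr hi
  have hi2 : (1 : ℝ) ≤ (i : ℝ) ^ 2 := by nlinarith [h1i]
  have hin : (8 / 3 : ℝ) ^ i ≤ (8 / 3 : ℝ) ^ i * (i : ℝ) ^ 2 := by nlinarith [h83, hi2]
  exact le_trans (mul_le_mul_of_nonneg_left hin hρ.le) h

lemma key2 {r : ℝ} (hr : 2 ≤ r) {i : ℕ} (hi : 1 ≤ i) :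
    rseq r i ^ (-(1 / 2) : ℝ) * ((8 / 3 : ℝ) ^ i * (i : ℝ))
      ≤ 2 ^ 70 * r ^ (-(1 / 2) : ℝ) * (1 / 2 : ℝ) ^ i := by
  obtain ⟨hρ, h83, h1i⟩ := key_facts hr hi
  have h := key hr hi
  have hin : (8 / 3 : ℝ) ^ i * (i : ℝ) ≤ (8 / 3 : ℝ) ^ i * (i : ℝ) ^ 2 := by
    have : (i : ℝ) ≤ (i : ℝ) ^ 2 := by nlinarith [h1i]
    exact mul_le_mul_of_nonneg_left this (by positivity)
  exact le_trans (mul_le_mul_of_nonneg_left hin hρ.le) h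

lemma key3 {r : ℝ} (hr : 2 ≤ r) {i : ℕ} (hi : 1 ≤ i) :
    rseq r i ^ (-(1 / 2) : ℝ) * (i : ℝ)
      ≤ 2 ^ 70 * r ^ (-(1 / 2) : ℝ) * (1 / 2 : ℝ) ^ i := by
  obtain ⟨hρ, h83, h1i⟩ := key_facts hr hi
  have h := key hr hi
  have hin : (i : ℝ) ≤ (8 / 3 : ℝ) ^ i * (i : ℝ) ^ 2 := by
    nlinarith [h1i, h83, mul_nonneg (sub_nonneg.2 h83) (sq_nonneg (i : ℝ))]
  exact le_trans (mul_le_mul_of_nonneg_left hin hρ.le) h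

lemma Sbound {r : ℝ} (hr : 2 ≤ r) {j : ℕ} (hj : 2 ≤ j) :
    ∑ i ∈ Icc 1 (j - 1), rseq r i ^ ((1 : ℝ) / 2) * beta0 r i
      ≤ ((j : ℝ) - 1) * (rseq r (j - 1) ^ ((1 : ℝ) / 2) * (8 / 3 : ℝ) ^ (j - 1)) := by
  have hcard : (Icc 1 (j - 1)).card = j - 1 := by rw [Nat.card_Icc]; omega
  have hterm : ∀ i ∈ Icc 1 (j - 1), rseq r i ^ ((1 : ℝ) / 2) * beta0 r i
      ≤ rseq r (j - 1) ^ ((1 : ℝ) / 2) * (8 / 3 : ℝ) ^ (j - 1) := by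
    intro i hi
    obtain ⟨h1, h2⟩ := mem_Icc.mp hi
    rw [beta0_eq hr]
    have hm : rseq r i ^ ((1 : ℝ) / 2) ≤ rseq r (j - 1) ^ ((1 : ℝ) / 2) :=
      Real.rpow_le_rpow (rseq_pos hr i).le (rseq_mono hr h2) (by norm_num)
    have hb : (8 / 3 : ℝ) ^ i ≤ (8 / 3 : ℝ) ^ (j - 1) := pow_le_pow_right₀ (by norm_num) h2
    exact mul_le_mul hm hb (by positivity) (Real.rpow_nonneg (rseq_pos hr _).le _)
  calc ∑ i ∈ Icc 1 (j - 1), rseq r i ^ ((1 : ℝ) / 2) * beta0 r i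
      ≤ (Icc 1 (j - 1)).card • (rseq r (j - 1) ^ ((1 : ℝ) / 2) * (8 / 3 : ℝ) ^ (j - 1)) :=
        Finset.sum_le_card_nsmul _ _ _ hterm
    _ = ((j : ℝ) - 1) * (rseq r (j - 1) ^ ((1 : ℝ) / 2) * (8 / 3 : ℝ) ^ (j - 1)) := by
        rw [hcard, nsmul_eq_mul, Nat.cast_sub (by omega)]
        norm_num

lemma t4 {r : ℝ} (hr : 2 ≤ r) {j : ℕ} (hj : 2 ≤ j) :
    rseq r j ^ (-(1 / 2) : ℝ) *
        (∑ i ∈ Icc 1 (j - 1), rseq r i ^ ((1 : ℝ) / 2) * beta0 r i)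
      ≤ 2 ^ 70 * r ^ (-(1 / 2) : ℝ) * (1 / 2 : ℝ) ^ (j - 1) := by
  have hρj : (0 : ℝ) < rseq r j ^ (-(1 / 2) : ℝ) :=
    Real.rpow_pos_of_pos (rseq_pos hr j) _
  have hc : ((j - 1 : ℕ) : ℝ) = (j : ℝ) - 1 := by
    rw [Nat.cast_sub (by omega)]; norm_num
  calc rseq r j ^ (-(1 / 2) : ℝ) *
        (∑ i ∈ Icc 1 (j - 1), rseq r i ^ ((1 : ℝ) / 2) * beta0 r i)
      ≤ rseq r j ^ (-(1 / 2) : ℝ) *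
          (((j : ℝ) - 1) * (rseq r (j - 1) ^ ((1 : ℝ) / 2) * (8 / 3 : ℝ) ^ (j - 1))) :=
        mul_le_mul_of_nonneg_left (Sbound hr hj) hρj.le
    _ = (rseq r j ^ (-(1 / 2) : ℝ) * rseq r (j - 1) ^ ((1 : ℝ) / 2)) *
          (((j : ℝ) - 1) * (8 / 3 : ℝ) ^ (j - 1)) := by ring
    _ = rseq r (j - 1) ^ (-(1 / 2) : ℝ) *
          ((8 / 3 : ℝ) ^ (j - 1) * ((j - 1 : ℕ) : ℝ)) := by
        rw [rhosig hr hj, hc]; ring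
    _ ≤ 2 ^ 70 * r ^ (-(1 / 2) : ℝ) * (1 / 2 : ℝ) ^ (j - 1) := key2 hr (by omega)

lemma t5 {r : ℝ} (hr : 2 ≤ r) {j : ℕ} (hj : 2 ≤ j) :
    rseq r j ^ (-(1 / 2) : ℝ) * (j : ℝ) *
        (∑ i ∈ Icc 1 (j - 1), rseq r i ^ ((1 : ℝ) / 2) * beta0 r i)
      ≤ 2 * (2 ^ 70 * r ^ (-(1 / 2) : ℝ) * (1 / 2 : ℝ) ^ (j - 1)) := by
  have hρj : (0 : ℝ) < rseq r j ^ (-(1 / 2) : ℝ) :=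
    Real.rpow_pos_of_pos (rseq_pos hr j) _
  have hρj' : (0 : ℝ) < rseq r (j - 1) ^ (-(1 / 2) : ℝ) :=
    Real.rpow_pos_of_pos (rseq_pos hr (j - 1)) _
  have hc : ((j - 1 : ℕ) : ℝ) = (j : ℝ) - 1 := by
    rw [Nat.cast_sub (by omega)]; norm_num
  have h2j : (j : ℝ) ≤ 2 * ((j : ℝ) - 1) := by
    have : (2 : ℝ) ≤ (j : ℝ) := by exact_mod_cast hj
    linarith
  have hjnn : (0 : ℝ) ≤ (j : ℝ) := Nat.cast_nonneg j
  calc rseq r j ^ (-(1 / 2) : ℝ) * (j : ℝ) *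
        (∑ i ∈ Icc 1 (j - 1), rseq r i ^ ((1 : ℝ) / 2) * beta0 r i)
      ≤ rseq r j ^ (-(1 / 2) : ℝ) * (j : ℝ) *
          (((j : ℝ) - 1) * (rseq r (j - 1) ^ ((1 : ℝ) / 2) * (8 / 3 : ℝ) ^ (j - 1))) :=
        mul_le_mul_of_nonneg_left (Sbound hr hj) (by positivity)
    _ = (rseq r j ^ (-(1 / 2) : ℝ) * rseq r (j - 1) ^ ((1 : ℝ) / 2)) *
          ((j : ℝ) * (((j : ℝ) - 1) * (8 / 3 : ℝ) ^ (j - 1))) := by ring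
    _ = rseq r (j - 1) ^ (-(1 / 2) : ℝ) *
          ((j : ℝ) * (((j : ℝ) - 1) * (8 / 3 : ℝ) ^ (j - 1))) := by rw [rhosig hr hj]
    _ ≤ rseq r (j - 1) ^ (-(1 / 2) : ℝ) *
          ((2 * ((j : ℝ) - 1)) * (((j : ℝ) - 1) * (8 / 3 : ℝ) ^ (j - 1))) := by
        have hge : (2 : ℝ) ≤ (j : ℝ) := by exact_mod_cast hj
        have hnn : (0 : ℝ) ≤ ((j : ℝ) - 1) * (8 / 3 : ℝ) ^ (j - 1) :=
          mul_nonneg (by linarith) (by positivity)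
        have := mul_le_mul_of_nonneg_right h2j hnn
        exact mul_le_mul_of_nonneg_left (by nlinarith) hρj'.le
    _ = 2 * (rseq r (j - 1) ^ (-(1 / 2) : ℝ) *
          ((8 / 3 : ℝ) ^ (j - 1) * ((j - 1 : ℕ) : ℝ) ^ 2)) := by
        rw [hc]; ring
    _ ≤ 2 * (2 ^ 70 * r ^ (-(1 / 2) : ℝ) * (1 / 2 : ℝ) ^ (j - 1)) := by
        have := key hr (show 1 ≤ j - 1 by omega)
        linarith

lemma sum_half_le {c : ℝ} (hc : 0 ≤ c) (N : ℕ) :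
    ∑ i ∈ Icc 1 N, c * ((1 : ℝ) / 2) ^ i ≤ c := by
  rw [← Finset.mul_sum, geo1 N]
  have h : (0 : ℝ) ≤ (1 / 2 : ℝ) ^ N := by positivity
  nlinarith

lemma geo2 (N : ℕ) : ∑ j ∈ Icc 2 N, ((1 : ℝ) / 2) ^ (j - 1) ≤ 2 := by
  have h1 : ∑ j ∈ Icc 2 N, ((1 : ℝ) / 2) ^ (j - 1)
      ≤ ∑ j ∈ Icc 2 N, 2 * ((1 : ℝ) / 2) ^ j := by
    apply Finset.sum_le_sum
    intro j hj
    obtain ⟨h2, _⟩ := mem_Icc.mp hj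
    have : ((1 : ℝ) / 2) ^ j = ((1 : ℝ) / 2) ^ (j - 1) * (1 / 2) := by
      rw [← pow_succ]
      congr 1
      omega
    rw [this]
    ring_nf
    linarith [le_refl (((1:ℝ)/2) ^ (j-1))]
  have h2 : ∑ j ∈ Icc 2 N, 2 * ((1 : ℝ) / 2) ^ j
      ≤ ∑ j ∈ Icc 1 N, 2 * ((1 : ℝ) / 2) ^ j := by
    apply Finset.sum_le_sum_of_subset_of_nonneg
    · apply Finset.Icc_subset_Icc_left
      omega
    · intro i _ _
      positivity
  have h3 := sum_half_le (show (0:ℝ) ≤ 2 by norm_num) N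
  linarith

lemma sum_half2_le {c : ℝ} (hc : 0 ≤ c) (N : ℕ) :
    ∑ j ∈ Icc 2 N, c * ((1 : ℝ) / 2) ^ (j - 1) ≤ 2 * c := by
  rw [← Finset.mul_sum]
  nlinarith [geo2 N]


/-- The arithmetic content of the total update debt bound: there is a
universal constant `C` such that for every `r ≥ 2` and every `N ≥ 1`, the
seven-term sum below is at most `C · r^{-1/2} (log₂ r)²`. -/
theorem total_update_debt_bound :
    ∃ C : ℝ, 0 < C ∧ ∀ r : ℝ, 2 ≤ r → ∀ N : ℕ, 1 ≤ N →
      r ^ (-(1 / 2) : ℝ) * Real.logb 2 r +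
      (∑ i ∈ Finset.Icc 1 N, rseq r i ^ (-(1 / 2) : ℝ) * beta0 r i * Real.logb 2 r) +
      (∑ i ∈ Finset.Icc 1 N, rseq r i ^ (-(1 / 2) : ℝ) * beta0 r i * (i : ℝ)) +
      (∑ j ∈ Finset.Icc 2 N, rseq r j ^ (-(1 / 2) : ℝ) *
          (∑ i ∈ Finset.Icc 1 (j - 1), rseq r i ^ ((1 : ℝ) / 2) * beta0 r i) *
          Real.logb 2 r) +
      (∑ j ∈ Finset.Icc 2 N, rseq r j ^ (-(1 / 2) : ℝ) * (j : ℝ) *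
          (∑ i ∈ Finset.Icc 1 (j - 1), rseq r i ^ ((1 : ℝ) / 2) * beta0 r i)) +
      (∑ j ∈ Finset.Icc 1 N, rseq r j ^ (-(1 / 2) : ℝ) * (Real.logb 2 r) ^ 2) +
      (∑ j ∈ Finset.Icc 1 N, rseq r j ^ (-(1 / 2) : ℝ) * (j : ℝ) * Real.logb 2 r) ≤
        C * r ^ (-(1 / 2) : ℝ) * (Real.logb 2 r) ^ 2 := by
  refine ⟨1024 * 2 ^ 70, by positivity, ?_⟩
  intro r hr N hN
  have hr0 : (0 : ℝ) < r := by linarith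
  have hρ : (0 : ℝ) < r ^ (-(1 / 2) : ℝ) := Real.rpow_pos_of_pos hr0 _
  set L := Real.logb 2 r with hLdef
  have hL : 1 ≤ L := by
    rw [hLdef, show (1 : ℝ) = Real.logb 2 2 from (Real.logb_self_eq_one one_lt_two).symm]
    exact Real.logb_le_logb_of_le one_lt_two two_pos hr
  have hL0 : (0 : ℝ) ≤ L := by linarith
  have hLsq : L ≤ L ^ 2 := by nlinarith
  have h1L : (1 : ℝ) ≤ L ^ 2 := by nlinarith
  -- term 2
  have hB2 : (∑ i ∈ Icc 1 N, rseq r i ^ (-(1 / 2) : ℝ) * beta0 r i * L)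
      ≤ 2 ^ 70 * r ^ (-(1 / 2) : ℝ) * L := by
    calc (∑ i ∈ Icc 1 N, rseq r i ^ (-(1 / 2) : ℝ) * beta0 r i * L)
        ≤ ∑ i ∈ Icc 1 N, (2 ^ 70 * r ^ (-(1 / 2) : ℝ) * L) * ((1 : ℝ) / 2) ^ i := by
          apply Finset.sum_le_sum
          intro i hi
          rw [beta0_eq hr]
          calc rseq r i ^ (-(1 / 2) : ℝ) * (8 / 3 : ℝ) ^ i * L
              ≤ (2 ^ 70 * r ^ (-(1 / 2) : ℝ) * ((1 : ℝ) / 2) ^ i) * L :=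
                mul_le_mul_of_nonneg_right (key1 hr (mem_Icc.mp hi).1) hL0
            _ = (2 ^ 70 * r ^ (-(1 / 2) : ℝ) * L) * ((1 : ℝ) / 2) ^ i := by ring
      _ ≤ 2 ^ 70 * r ^ (-(1 / 2) : ℝ) * L := sum_half_le (by positivity) N
  -- term 3
  have hB3 : (∑ i ∈ Icc 1 N, rseq r i ^ (-(1 / 2) : ℝ) * beta0 r i * (i : ℝ))
      ≤ 2 ^ 70 * r ^ (-(1 / 2) : ℝ) := by
    calc (∑ i ∈ Icc 1 N, rseq r i ^ (-(1 / 2) : ℝ) * beta0 r i * (i : ℝ))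
        ≤ ∑ i ∈ Icc 1 N, (2 ^ 70 * r ^ (-(1 / 2) : ℝ)) * ((1 : ℝ) / 2) ^ i := by
          apply Finset.sum_le_sum
          intro i hi
          rw [beta0_eq hr]
          calc rseq r i ^ (-(1 / 2) : ℝ) * (8 / 3 : ℝ) ^ i * (i : ℝ)
              = rseq r i ^ (-(1 / 2) : ℝ) * ((8 / 3 : ℝ) ^ i * (i : ℝ)) := by ring
            _ ≤ 2 ^ 70 * r ^ (-(1 / 2) : ℝ) * ((1 : ℝ) / 2) ^ i :=
                key2 hr (mem_Icc.mp hi).1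
      _ ≤ 2 ^ 70 * r ^ (-(1 / 2) : ℝ) := sum_half_le (by positivity) N
  -- term 4
  have hB4 : (∑ j ∈ Icc 2 N, rseq r j ^ (-(1 / 2) : ℝ) *
        (∑ i ∈ Icc 1 (j - 1), rseq r i ^ ((1 : ℝ) / 2) * beta0 r i) * L)
      ≤ 2 * (2 ^ 70 * r ^ (-(1 / 2) : ℝ) * L) := by
    calc (∑ j ∈ Icc 2 N, rseq r j ^ (-(1 / 2) : ℝ) *
          (∑ i ∈ Icc 1 (j - 1), rseq r i ^ ((1 : ℝ) / 2) * beta0 r i) * L)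
        ≤ ∑ j ∈ Icc 2 N, (2 ^ 70 * r ^ (-(1 / 2) : ℝ) * L) * ((1 : ℝ) / 2) ^ (j - 1) := by
          apply Finset.sum_le_sum
          intro j hj
          calc rseq r j ^ (-(1 / 2) : ℝ) *
                (∑ i ∈ Icc 1 (j - 1), rseq r i ^ ((1 : ℝ) / 2) * beta0 r i) * L
              ≤ (2 ^ 70 * r ^ (-(1 / 2) : ℝ) * ((1 : ℝ) / 2) ^ (j - 1)) * L :=
                mul_le_mul_of_nonneg_right (t4 hr (mem_Icc.mp hj).1) hL0
            _ = (2 ^ 70 * r ^ (-(1 / 2) : ℝ) * L) * ((1 : ℝ) / 2) ^ (j - 1) := by ring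
      _ ≤ 2 * (2 ^ 70 * r ^ (-(1 / 2) : ℝ) * L) := sum_half2_le (by positivity) N
  -- term 5
  have hB5 : (∑ j ∈ Icc 2 N, rseq r j ^ (-(1 / 2) : ℝ) * (j : ℝ) *
        (∑ i ∈ Icc 1 (j - 1), rseq r i ^ ((1 : ℝ) / 2) * beta0 r i))
      ≤ 2 * (2 * (2 ^ 70 * r ^ (-(1 / 2) : ℝ))) := by
    calc (∑ j ∈ Icc 2 N, rseq r j ^ (-(1 / 2) : ℝ) * (j : ℝ) *
          (∑ i ∈ Icc 1 (j - 1), rseq r i ^ ((1 : ℝ) / 2) * beta0 r i))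
        ≤ ∑ j ∈ Icc 2 N, (2 * (2 ^ 70 * r ^ (-(1 / 2) : ℝ))) * ((1 : ℝ) / 2) ^ (j - 1) := by
          apply Finset.sum_le_sum
          intro j hj
          calc rseq r j ^ (-(1 / 2) : ℝ) * (j : ℝ) *
                (∑ i ∈ Icc 1 (j - 1), rseq r i ^ ((1 : ℝ) / 2) * beta0 r i)
              ≤ 2 * (2 ^ 70 * r ^ (-(1 / 2) : ℝ) * ((1 : ℝ) / 2) ^ (j - 1)) :=
                t5 hr (mem_Icc.mp hj).1
            _ = (2 * (2 ^ 70 * r ^ (-(1 / 2) : ℝ))) * ((1 : ℝ) / 2) ^ (j - 1) := by ring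
      _ ≤ 2 * (2 * (2 ^ 70 * r ^ (-(1 / 2) : ℝ))) := sum_half2_le (by positivity) N
  -- term 6
  have hB6 : (∑ j ∈ Icc 1 N, rseq r j ^ (-(1 / 2) : ℝ) * L ^ 2)
      ≤ 2 ^ 70 * r ^ (-(1 / 2) : ℝ) * L ^ 2 := by
    calc (∑ j ∈ Icc 1 N, rseq r j ^ (-(1 / 2) : ℝ) * L ^ 2)
        ≤ ∑ j ∈ Icc 1 N, (2 ^ 70 * r ^ (-(1 / 2) : ℝ) * L ^ 2) * ((1 : ℝ) / 2) ^ j := by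
          apply Finset.sum_le_sum
          intro j hj
          calc rseq r j ^ (-(1 / 2) : ℝ) * L ^ 2
              ≤ (2 ^ 70 * r ^ (-(1 / 2) : ℝ) * ((1 : ℝ) / 2) ^ j) * L ^ 2 :=
                mul_le_mul_of_nonneg_right (key0 hr (mem_Icc.mp hj).1) (by positivity)
            _ = (2 ^ 70 * r ^ (-(1 / 2) : ℝ) * L ^ 2) * ((1 : ℝ) / 2) ^ j := by ring
      _ ≤ 2 ^ 70 * r ^ (-(1 / 2) : ℝ) * L ^ 2 := sum_half_le (by positivity) N
  -- term 7
  have hB7 : (∑ j ∈ Icc 1 N, rseq r j ^ (-(1 / 2) : ℝ) * (j : ℝ) * L)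
      ≤ 2 ^ 70 * r ^ (-(1 / 2) : ℝ) * L := by
    calc (∑ j ∈ Icc 1 N, rseq r j ^ (-(1 / 2) : ℝ) * (j : ℝ) * L)
        ≤ ∑ j ∈ Icc 1 N, (2 ^ 70 * r ^ (-(1 / 2) : ℝ) * L) * ((1 : ℝ) / 2) ^ j := by
          apply Finset.sum_le_sum
          intro j hj
          calc rseq r j ^ (-(1 / 2) : ℝ) * (j : ℝ) * L
              ≤ (2 ^ 70 * r ^ (-(1 / 2) : ℝ) * ((1 : ℝ) / 2) ^ j) * L :=
                mul_le_mul_of_nonneg_right (key3 hr (mem_Icc.mp hj).1) hL0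
            _ = (2 ^ 70 * r ^ (-(1 / 2) : ℝ) * L) * ((1 : ℝ) / 2) ^ j := by ring
      _ ≤ 2 ^ 70 * r ^ (-(1 / 2) : ℝ) * L := sum_half_le (by positivity) N
  -- combine
  have n1 : r ^ (-(1 / 2) : ℝ) * L ≤ r ^ (-(1 / 2) : ℝ) * L ^ 2 :=
    mul_le_mul_of_nonneg_left hLsq hρ.le
  have n2 : r ^ (-(1 / 2) : ℝ) ≤ r ^ (-(1 / 2) : ℝ) * L ^ 2 :=
    le_mul_of_one_le_right hρ.le h1L
  linarith [hB2, hB3, hB4, hB5, hB6, hB7, n1, n2]
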